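/- The ℚ-algebra ℚ[x,y,z]/(xz, yz, x³, xy² − y³, z² − x²y²) is a 10-dimensional ℚ-vector space, with basis the images of the ten monomials 1, x, y, x², xy, y², z, x²y, xy², x²y². -/

import Mathlib

set_option synthInstance.maxHeartbeats 400000

open MvPolynomial

noncomputable section

/-- The polynomial ring `ℚ[x,y,z]`. -/
abbrev Axyz : Type := MvPolynomial (Fin 3) ℚ

/-- `x` -/ def xA : Axyz := X 0
/-- `y` -/ def yA : Axyz := X 1
/-- `z` -/ def zA : Axyz := X 2

/-- The ideal `(xz, yz, x³, xy² - y³, z² - x²y²)`. -/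
def IQuot : Ideal Axyz :=
  Ideal.span {xA * zA, yA * zA, xA ^ 3, xA * yA ^ 2 - yA ^ 3,
    zA ^ 2 - xA ^ 2 * yA ^ 2}

/-- The ten standard monomials `1, x, y, x², xy, y², z, x²y, xy², x²y²`. -/
def mons : Fin 10 → Axyz :=
  ![1, xA, yA, xA ^ 2, xA * yA, yA ^ 2, zA, xA ^ 2 * yA, xA * yA ^ 2, xA ^ 2 * yA ^ 2]



structure Ch where
  c0 : ℚ
  c1 : ℚ
  c2 : ℚ
  c3 : ℚ
  c4 : ℚ
  c5 : ℚ
  c6 : ℚ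
  c7 : ℚ
  c8 : ℚ
  c9 : ℚ

namespace Ch

def add (p q : Ch) : Ch :=
  ⟨p.c0+q.c0, p.c1+q.c1, p.c2+q.c2, p.c3+q.c3, p.c4+q.c4, p.c5+q.c5, p.c6+q.c6,
   p.c7+q.c7, p.c8+q.c8, p.c9+q.c9⟩

def neg (p : Ch) : Ch :=
  ⟨-p.c0, -p.c1, -p.c2, -p.c3, -p.c4, -p.c5, -p.c6, -p.c7, -p.c8, -p.c9⟩

def mul (p q : Ch) : Ch :=
  ⟨p.c0*q.c0,
   p.c0*q.c1 + p.c1*q.c0,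
   p.c0*q.c2 + p.c2*q.c0,
   p.c0*q.c3 + p.c3*q.c0 + p.c1*q.c1,
   p.c0*q.c4 + p.c4*q.c0 + p.c1*q.c2 + p.c2*q.c1,
   p.c0*q.c5 + p.c5*q.c0 + p.c2*q.c2,
   p.c0*q.c6 + p.c6*q.c0,
   p.c0*q.c7 + p.c7*q.c0 + p.c1*q.c4 + p.c4*q.c1 + p.c2*q.c3 + p.c3*q.c2,
   p.c0*q.c8 + p.c8*q.c0 + p.c1*q.c5 + p.c5*q.c1 + p.c2*q.c4 + p.c4*q.c2 + p.c2*q.c5 + p.c5*q.c2,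
   p.c0*q.c9 + p.c9*q.c0 + p.c1*q.c8 + p.c8*q.c1 + p.c2*q.c7 + p.c7*q.c2 + p.c2*q.c8 + p.c8*q.c2
     + p.c3*q.c5 + p.c5*q.c3 + p.c4*q.c4 + p.c4*q.c5 + p.c5*q.c4 + p.c5*q.c5 + p.c6*q.c6⟩

def smul (a : ℚ) (p : Ch) : Ch :=
  ⟨a*p.c0, a*p.c1, a*p.c2, a*p.c3, a*p.c4, a*p.c5, a*p.c6, a*p.c7, a*p.c8, a*p.c9⟩

instance : Zero Ch := ⟨⟨0,0,0,0,0,0,0,0,0,0⟩⟩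
instance : One Ch := ⟨⟨1,0,0,0,0,0,0,0,0,0⟩⟩
instance : Add Ch := ⟨add⟩
instance : Neg Ch := ⟨neg⟩
instance : Mul Ch := ⟨mul⟩
instance : SMul ℚ Ch := ⟨smul⟩

variable {a0 a1 a2 a3 a4 a5 a6 a7 a8 a9 b0 b1 b2 b3 b4 b5 b6 b7 b8 b9 r : ℚ}

lemma mk_add : (Ch.mk a0 a1 a2 a3 a4 a5 a6 a7 a8 a9) + (Ch.mk b0 b1 b2 b3 b4 b5 b6 b7 b8 b9)
    = Ch.mk (a0+b0) (a1+b1) (a2+b2) (a3+b3) (a4+b4) (a5+b5) (a6+b6) (a7+b7) (a8+b8) (a9+b9) := rfl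

lemma mk_neg : -(Ch.mk a0 a1 a2 a3 a4 a5 a6 a7 a8 a9)
    = Ch.mk (-a0) (-a1) (-a2) (-a3) (-a4) (-a5) (-a6) (-a7) (-a8) (-a9) := rfl

lemma mk_mul : (Ch.mk a0 a1 a2 a3 a4 a5 a6 a7 a8 a9) * (Ch.mk b0 b1 b2 b3 b4 b5 b6 b7 b8 b9)
    = Ch.mk (a0*b0)
   (a0*b1 + a1*b0)
   (a0*b2 + a2*b0)
   (a0*b3 + a3*b0 + a1*b1)
   (a0*b4 + a4*b0 + a1*b2 + a2*b1)
   (a0*b5 + a5*b0 + a2*b2)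
   (a0*b6 + a6*b0)
   (a0*b7 + a7*b0 + a1*b4 + a4*b1 + a2*b3 + a3*b2)
   (a0*b8 + a8*b0 + a1*b5 + a5*b1 + a2*b4 + a4*b2 + a2*b5 + a5*b2)
   (a0*b9 + a9*b0 + a1*b8 + a8*b1 + a2*b7 + a7*b2 + a2*b8 + a8*b2
     + a3*b5 + a5*b3 + a4*b4 + a4*b5 + a5*b4 + a5*b5 + a6*b6) := rfl

lemma mk_smul : Ch.smul r (Ch.mk a0 a1 a2 a3 a4 a5 a6 a7 a8 a9)
    = Ch.mk (r*a0) (r*a1) (r*a2) (r*a3) (r*a4) (r*a5) (r*a6) (r*a7) (r*a8) (r*a9) := rfl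

lemma zero_def : (0 : Ch) = Ch.mk 0 0 0 0 0 0 0 0 0 0 := rfl
lemma one_def : (1 : Ch) = Ch.mk 1 0 0 0 0 0 0 0 0 0 := rfl


lemma law_add_assoc (p q r : Ch) : p + q + r = p + (q + r) := by
  cases p; cases q; cases r; simp only [mk_add, mk.injEq]; and_intros <;> ring
lemma law_zero_add (p : Ch) : 0 + p = p := by
  cases p; simp only [zero_def, mk_add, mk.injEq]; and_intros <;> ring
lemma law_add_zero (p : Ch) : p + 0 = p := by
  cases p; simp only [zero_def, mk_add, mk.injEq]; and_intros <;> ring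
lemma law_add_comm (p q : Ch) : p + q = q + p := by
  cases p; cases q; simp only [mk_add, mk.injEq]; and_intros <;> ring
lemma law_mul_assoc (p q r : Ch) : p * q * r = p * (q * r) := by
  cases p; cases q; cases r; simp only [mk_mul, mk.injEq]; and_intros <;> ring
lemma law_one_mul (p : Ch) : 1 * p = p := by
  cases p; simp only [one_def, mk_mul, mk.injEq]; and_intros <;> ring
lemma law_mul_one (p : Ch) : p * 1 = p := by
  cases p; simp only [one_def, mk_mul, mk.injEq]; and_intros <;> ring
lemma law_left_distrib (p q r : Ch) : p * (q + r) = p * q + p * r := by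
  cases p; cases q; cases r; simp only [mk_add, mk_mul, mk.injEq]; and_intros <;> ring
lemma law_right_distrib (p q r : Ch) : (p + q) * r = p * r + q * r := by
  cases p; cases q; cases r; simp only [mk_add, mk_mul, mk.injEq]; and_intros <;> ring
lemma law_zero_mul (p : Ch) : 0 * p = 0 := by
  cases p; simp only [zero_def, mk_mul, mk.injEq]; and_intros <;> ring
lemma law_mul_zero (p : Ch) : p * 0 = 0 := by
  cases p; simp only [zero_def, mk_mul, mk.injEq]; and_intros <;> ring
lemma law_mul_comm (p q : Ch) : p * q = q * p := by
  cases p; cases q; simp only [mk_mul, mk.injEq]; and_intros <;> ring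
lemma law_neg_add_cancel (p : Ch) : -p + p = 0 := by
  cases p; simp only [zero_def, mk_neg, mk_add, mk.injEq]; and_intros <;> ring
lemma law_nsmul_zero (p : Ch) : smul ((0:ℕ):ℚ) p = 0 := by
  cases p; simp only [mk_smul, zero_def, mk.injEq]; and_intros <;> push_cast <;> ring
lemma law_nsmul_succ (n : ℕ) (p : Ch) : smul ((n+1:ℕ):ℚ) p = smul (n:ℚ) p + p := by
  cases p; simp only [mk_smul, mk_add, mk.injEq]; and_intros <;> push_cast <;> ring
lemma law_zsmul_zero (p : Ch) : smul ((0:ℤ):ℚ) p = 0 := by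
  cases p; simp only [mk_smul, zero_def, mk.injEq]; and_intros <;> push_cast <;> ring
lemma law_zsmul_succ (n : ℕ) (p : Ch) : smul (((n:ℤ)+1:ℤ):ℚ) p = smul ((n:ℤ):ℚ) p + p := by
  cases p; simp only [mk_smul, mk_add, mk.injEq]; and_intros <;> push_cast <;> ring
lemma law_zsmul_neg (n : ℕ) (p : Ch) : smul ((-(n+1:ℕ):ℤ):ℚ) p = -(smul (((n+1:ℕ):ℤ):ℚ) p) := by
  cases p; simp only [mk_smul, mk_neg, mk.injEq]; and_intros <;> push_cast <;> ring

instance : CommRing Ch where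
  add_assoc := law_add_assoc
  zero_add := law_zero_add
  add_zero := law_add_zero
  add_comm := law_add_comm
  mul_assoc := law_mul_assoc
  one_mul := law_one_mul
  mul_one := law_mul_one
  left_distrib := law_left_distrib
  right_distrib := law_right_distrib
  zero_mul := law_zero_mul
  mul_zero := law_mul_zero
  mul_comm := law_mul_comm
  neg_add_cancel := law_neg_add_cancel
  nsmul := fun n p => smul (n : ℚ) p
  nsmul_zero := law_nsmul_zero
  nsmul_succ := law_nsmul_succ
  zsmul := fun n p => smul (n : ℚ) p
  zsmul_zero' := law_zsmul_zero
  zsmul_succ' := law_zsmul_succ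
  zsmul_neg' := law_zsmul_neg

end Ch

namespace Ch

def algMap : ℚ →+* Ch where
  toFun a := ⟨a,0,0,0,0,0,0,0,0,0⟩
  map_one' := rfl
  map_mul' a b := by simp only [mk_mul]; rw [mk.injEq]; and_intros <;> ring
  map_zero' := rfl
  map_add' a b := by simp only [mk_add]; rw [mk.injEq]; and_intros <;> ring

instance : Algebra ℚ Ch where
  algebraMap := algMap
  commutes' a p := law_mul_comm _ _
  smul_def' a p := by
    cases p
    show smul a _ = algMap a * _
    simp only [algMap, RingHom.coe_mk, MonoidHom.coe_mk, OneHom.coe_mk, mk_smul, mk_mul]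
    rw [mk.injEq]
    and_intros <;> ring

/-- x -/ def xV : Ch := ⟨0,1,0,0,0,0,0,0,0,0⟩
/-- y -/ def yV : Ch := ⟨0,0,1,0,0,0,0,0,0,0⟩
/-- z -/ def zV : Ch := ⟨0,0,0,0,0,0,1,0,0,0⟩

lemma xV_mul_zV : xV * zV = 0 := by
  simp only [xV, zV, mk_mul, zero_def, mk.injEq]; norm_num
lemma yV_mul_zV : yV * zV = 0 := by
  simp only [yV, zV, mk_mul, zero_def, mk.injEq]; norm_num
lemma xV_pow : xV ^ 3 = 0 := by
  simp only [pow_succ, pow_zero, one_mul]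
  simp only [xV, mk_mul, zero_def, mk.injEq]; norm_num
lemma xy_rel : xV * yV ^ 2 - yV ^ 3 = 0 := by
  simp only [pow_succ, pow_zero, one_mul]
  simp only [xV, yV, mk_mul, mk_neg, mk_add, zero_def, mk.injEq, sub_eq_add_neg]
  norm_num
lemma z_rel : zV ^ 2 - xV ^ 2 * yV ^ 2 = 0 := by
  simp only [pow_succ, pow_zero, one_mul]
  simp only [xV, yV, zV, mk_mul, mk_neg, mk_add, zero_def, mk.injEq, sub_eq_add_neg]
  norm_num

end Ch

section ChowMain


/-- The three generators in `Ch`. -/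
def gensV : Fin 3 → Ch := ![Ch.xV, Ch.yV, Ch.zV]

/-- Evaluation algebra hom. -/
def psiC : Axyz →ₐ[ℚ] Ch := aeval gensV

lemma psiC_xA : psiC xA = Ch.xV := by simp [psiC, xA, gensV]
lemma psiC_yA : psiC yA = Ch.yV := by simp [psiC, yA, gensV]
lemma psiC_zA : psiC zA = Ch.zV := by simp [psiC, zA, gensV]

lemma psiC_ker : ∀ a ∈ IQuot, psiC a = 0 := by
  intro a ha
  rw [IQuot] at ha
  have hle : Ideal.span {xA * zA, yA * zA, xA ^ 3, xA * yA ^ 2 - yA ^ 3,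
      zA ^ 2 - xA ^ 2 * yA ^ 2} ≤ RingHom.ker (psiC : Axyz →+* Ch) := by
    rw [Ideal.span_le]
    rintro g hg
    simp only [Set.mem_insert_iff, Set.mem_singleton_iff] at hg
    rcases hg with rfl | rfl | rfl | rfl | rfl <;>
      simp only [SetLike.mem_coe, RingHom.mem_ker, AlgHom.coe_toRingHom, map_mul, map_pow,
        map_sub, psiC_xA, psiC_yA, psiC_zA]
    · exact Ch.xV_mul_zV
    · exact Ch.yV_mul_zV
    · exact Ch.xV_pow
    · exact Ch.xy_rel
    · exact Ch.z_rel
  exact hle ha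

/-- unit "vectors" in Ch -/
def eC : Fin 10 → Ch :=
  ![⟨1,0,0,0,0,0,0,0,0,0⟩, ⟨0,1,0,0,0,0,0,0,0,0⟩, ⟨0,0,1,0,0,0,0,0,0,0⟩,
    ⟨0,0,0,1,0,0,0,0,0,0⟩, ⟨0,0,0,0,1,0,0,0,0,0⟩, ⟨0,0,0,0,0,1,0,0,0,0⟩,
    ⟨0,0,0,0,0,0,1,0,0,0⟩, ⟨0,0,0,0,0,0,0,1,0,0⟩, ⟨0,0,0,0,0,0,0,0,1,0⟩,
    ⟨0,0,0,0,0,0,0,0,0,1⟩]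

lemma psiC_mons (i : Fin 10) : psiC (mons i) = eC i := by
  have h3 : psiC (xA ^ 2) = (⟨0,0,0,1,0,0,0,0,0,0⟩ : Ch) := by
    rw [map_pow, psiC_xA]
    simp only [pow_succ, pow_zero, one_mul, Ch.xV, Ch.mk_mul, Ch.mk.injEq]
    norm_num
  have h4 : psiC (xA * yA) = (⟨0,0,0,0,1,0,0,0,0,0⟩ : Ch) := by
    rw [map_mul, psiC_xA, psiC_yA]
    simp only [Ch.xV, Ch.yV, Ch.mk_mul, Ch.mk.injEq]
    norm_num
  have h5 : psiC (yA ^ 2) = (⟨0,0,0,0,0,1,0,0,0,0⟩ : Ch) := by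
    rw [map_pow, psiC_yA]
    simp only [pow_succ, pow_zero, one_mul, Ch.yV, Ch.mk_mul, Ch.mk.injEq]
    norm_num
  have h7 : psiC (xA ^ 2 * yA) = (⟨0,0,0,0,0,0,0,1,0,0⟩ : Ch) := by
    rw [map_mul, psiC_yA, h3]
    simp only [Ch.yV, Ch.mk_mul, Ch.mk.injEq]
    norm_num
  have h8 : psiC (xA * yA ^ 2) = (⟨0,0,0,0,0,0,0,0,1,0⟩ : Ch) := by
    rw [map_mul, psiC_xA, h5]
    simp only [Ch.xV, Ch.mk_mul, Ch.mk.injEq]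
    norm_num
  have h9 : psiC (xA ^ 2 * yA ^ 2) = (⟨0,0,0,0,0,0,0,0,0,1⟩ : Ch) := by
    rw [map_mul, h3, h5]
    simp only [Ch.mk_mul, Ch.mk.injEq]
    norm_num
  fin_cases i
  · show psiC 1 = _
    rw [map_one]; rfl
  · show psiC xA = _
    rw [psiC_xA]; rfl
  · show psiC yA = _
    rw [psiC_yA]; rfl
  · show psiC (xA ^ 2) = _
    rw [h3]; rfl
  · show psiC (xA * yA) = _
    rw [h4]; rfl
  · show psiC (yA ^ 2) = _
    rw [h5]; rfl
  · show psiC zA = _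
    rw [psiC_zA]; rfl
  · show psiC (xA ^ 2 * yA) = _
    rw [h7]; rfl
  · show psiC (xA * yA ^ 2) = _
    rw [h8]; rfl
  · show psiC (xA ^ 2 * yA ^ 2) = _
    rw [h9]; rfl

/-- Coordinate projection as a linear map. -/
def coordC : Ch →ₗ[ℚ] (Fin 10 → ℚ) where
  toFun p := ![p.c0, p.c1, p.c2, p.c3, p.c4, p.c5, p.c6, p.c7, p.c8, p.c9]
  map_add' p q := by
    cases p; cases q; funext k; fin_cases k <;> rfl
  map_smul' r p := by
    cases p; funext k; fin_cases k <;> rfl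

lemma coordC_eC (i : Fin 10) : coordC (eC i) = Pi.single i (1 : ℚ) := by
  fin_cases i <;>
    · funext k
      fin_cases k <;> rfl

end ChowMain

set_option maxHeartbeats 2000000 in
/-- The ring `ℚ[x,y,z]/(xz, yz, x³, xy² - y³, z² - x²y²)` — the rational Chow
ring of `Q_2(0,2)` — is a 10-dimensional `ℚ`-vector space with basis the images
of the ten monomials `1, x, y, x², xy, y², z, x²y, xy², x²y²`. -/
theorem chow_ring_dimension_ten :
    Module.finrank ℚ (Axyz ⧸ IQuot) = 10 ∧
    ∃ bas : Module.Basis (Fin 10) ℚ (Axyz ⧸ IQuot),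
      ∀ i : Fin 10, bas i = Ideal.Quotient.mk IQuot (mons i) := by
  -- linear independence
  have li : LinearIndependent ℚ (fun i : Fin 10 => Ideal.Quotient.mk IQuot (mons i)) := by
    set φ := Ideal.Quotient.liftₐ IQuot psiC psiC_ker with hφ
    apply LinearIndependent.of_comp (coordC.comp φ.toLinearMap)
    have hcomp : (⇑(coordC.comp φ.toLinearMap) ∘ fun i : Fin 10 => Ideal.Quotient.mk IQuot (mons i))
        = fun i : Fin 10 => Pi.single i (1 : ℚ) := by
      funext i
      have h1 : φ (Ideal.Quotient.mk IQuot (mons i)) = psiC (mons i) := by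
        rw [hφ]
        rfl
      simp only [Function.comp_apply, LinearMap.comp_apply, AlgHom.toLinearMap_apply, h1,
        psiC_mons, coordC_eC]
    rw [hcomp]
    have h2 : ⇑(Pi.basisFun ℚ (Fin 10)) = fun i : Fin 10 => Pi.single i (1 : ℚ) := by
      funext i; exact Pi.basisFun_apply ℚ (Fin 10) i
    rw [← h2]
    exact (Pi.basisFun ℚ (Fin 10)).linearIndependent
  -- spanning
  have sp : ⊤ ≤ Submodule.span ℚ
      (Set.range fun i : Fin 10 => Ideal.Quotient.mk IQuot (mons i)) := by
    set S := Submodule.span ℚ (Set.range fun i : Fin 10 => Ideal.Quotient.mk IQuot (mons i))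
      with hS
    have hm : ∀ k : Fin 10, Ideal.Quotient.mk IQuot (mons k) ∈ S :=
      fun k => Submodule.subset_span ⟨k, rfl⟩
    have mxz : xA * zA ∈ IQuot := Ideal.subset_span (by simp)
    have myz : yA * zA ∈ IQuot := Ideal.subset_span (by simp)
    have mx3 : xA ^ 3 ∈ IQuot := Ideal.subset_span (by simp)
    have rxz : (Ideal.Quotient.mk IQuot xA) * (Ideal.Quotient.mk IQuot zA) = 0 := by
      rw [← map_mul]; exact Ideal.Quotient.eq_zero_iff_mem.mpr mxz
    have ryz : (Ideal.Quotient.mk IQuot yA) * (Ideal.Quotient.mk IQuot zA) = 0 := by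
      rw [← map_mul]; exact Ideal.Quotient.eq_zero_iff_mem.mpr myz
    have rx3 : (Ideal.Quotient.mk IQuot xA) ^ 3 = 0 := by
      rw [← map_pow]; exact Ideal.Quotient.eq_zero_iff_mem.mpr mx3
    have ry3 : (Ideal.Quotient.mk IQuot xA) * (Ideal.Quotient.mk IQuot yA) ^ 2 = (Ideal.Quotient.mk IQuot yA) ^ 3 := by
      rw [← map_pow, ← map_mul, ← map_pow]
      exact Ideal.Quotient.eq.mpr (Ideal.subset_span (by simp))
    have rz2 : (Ideal.Quotient.mk IQuot zA) ^ 2 = (Ideal.Quotient.mk IQuot xA) ^ 2 * (Ideal.Quotient.mk IQuot yA) ^ 2 := by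
      rw [← map_pow, ← map_pow, ← map_pow, ← map_mul]
      exact Ideal.Quotient.eq.mpr (Ideal.subset_span (by simp))
    have key : ∀ n : Fin 3, ∀ v ∈ S, v * Ideal.Quotient.mk IQuot (X n) ∈ S := by
      intro n v hv
      induction hv using Submodule.span_induction with
      | mem w hw =>
          obtain ⟨j, rfl⟩ := hw
          fin_cases n <;> fin_cases j
          · show Ideal.Quotient.mk IQuot ((1 : Axyz)) * Ideal.Quotient.mk IQuot (xA) ∈ S
            have e : Ideal.Quotient.mk IQuot ((1 : Axyz)) * Ideal.Quotient.mk IQuot (xA) = Ideal.Quotient.mk IQuot (xA) := by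
              try simp only [map_mul, map_pow, map_one]
              try ring
            rw [e]; exact hm 1
          · show Ideal.Quotient.mk IQuot (xA) * Ideal.Quotient.mk IQuot (xA) ∈ S
            have e : Ideal.Quotient.mk IQuot (xA) * Ideal.Quotient.mk IQuot (xA) = Ideal.Quotient.mk IQuot (xA^2) := by
              try simp only [map_mul, map_pow, map_one]
              try ring
            rw [e]; exact hm 3
          · show Ideal.Quotient.mk IQuot (yA) * Ideal.Quotient.mk IQuot (xA) ∈ S
            have e : Ideal.Quotient.mk IQuot (yA) * Ideal.Quotient.mk IQuot (xA) = Ideal.Quotient.mk IQuot (xA*yA) := by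
              try simp only [map_mul, map_pow, map_one]
              try ring
            rw [e]; exact hm 4
          · show Ideal.Quotient.mk IQuot (xA^2) * Ideal.Quotient.mk IQuot (xA) ∈ S
            have e : Ideal.Quotient.mk IQuot (xA^2) * Ideal.Quotient.mk IQuot (xA) = 0 := by
              try simp only [map_mul, map_pow, map_one]
              try linear_combination rx3
            rw [e]; exact zero_mem _
          · show Ideal.Quotient.mk IQuot (xA*yA) * Ideal.Quotient.mk IQuot (xA) ∈ S
            have e : Ideal.Quotient.mk IQuot (xA*yA) * Ideal.Quotient.mk IQuot (xA) = Ideal.Quotient.mk IQuot (xA^2*yA) := by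
              try simp only [map_mul, map_pow, map_one]
              try ring
            rw [e]; exact hm 7
          · show Ideal.Quotient.mk IQuot (yA^2) * Ideal.Quotient.mk IQuot (xA) ∈ S
            have e : Ideal.Quotient.mk IQuot (yA^2) * Ideal.Quotient.mk IQuot (xA) = Ideal.Quotient.mk IQuot (xA*yA^2) := by
              try simp only [map_mul, map_pow, map_one]
              try ring
            rw [e]; exact hm 8
          · show Ideal.Quotient.mk IQuot (zA) * Ideal.Quotient.mk IQuot (xA) ∈ S
            have e : Ideal.Quotient.mk IQuot (zA) * Ideal.Quotient.mk IQuot (xA) = 0 := by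
              try simp only [map_mul, map_pow, map_one]
              try linear_combination rxz
            rw [e]; exact zero_mem _
          · show Ideal.Quotient.mk IQuot (xA^2*yA) * Ideal.Quotient.mk IQuot (xA) ∈ S
            have e : Ideal.Quotient.mk IQuot (xA^2*yA) * Ideal.Quotient.mk IQuot (xA) = 0 := by
              try simp only [map_mul, map_pow, map_one]
              try linear_combination (Ideal.Quotient.mk IQuot yA) * rx3
            rw [e]; exact zero_mem _
          · show Ideal.Quotient.mk IQuot (xA*yA^2) * Ideal.Quotient.mk IQuot (xA) ∈ S
            have e : Ideal.Quotient.mk IQuot (xA*yA^2) * Ideal.Quotient.mk IQuot (xA) = Ideal.Quotient.mk IQuot (xA^2*yA^2) := by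
              try simp only [map_mul, map_pow, map_one]
              try ring
            rw [e]; exact hm 9
          · show Ideal.Quotient.mk IQuot (xA^2*yA^2) * Ideal.Quotient.mk IQuot (xA) ∈ S
            have e : Ideal.Quotient.mk IQuot (xA^2*yA^2) * Ideal.Quotient.mk IQuot (xA) = 0 := by
              try simp only [map_mul, map_pow, map_one]
              try linear_combination (Ideal.Quotient.mk IQuot yA)^2 * rx3
            rw [e]; exact zero_mem _
          · show Ideal.Quotient.mk IQuot ((1 : Axyz)) * Ideal.Quotient.mk IQuot (yA) ∈ S
            have e : Ideal.Quotient.mk IQuot ((1 : Axyz)) * Ideal.Quotient.mk IQuot (yA) = Ideal.Quotient.mk IQuot (yA) := by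
              try simp only [map_mul, map_pow, map_one]
              try ring
            rw [e]; exact hm 2
          · show Ideal.Quotient.mk IQuot (xA) * Ideal.Quotient.mk IQuot (yA) ∈ S
            have e : Ideal.Quotient.mk IQuot (xA) * Ideal.Quotient.mk IQuot (yA) = Ideal.Quotient.mk IQuot (xA*yA) := by
              try simp only [map_mul, map_pow, map_one]
              try ring
            rw [e]; exact hm 4
          · show Ideal.Quotient.mk IQuot (yA) * Ideal.Quotient.mk IQuot (yA) ∈ S
            have e : Ideal.Quotient.mk IQuot (yA) * Ideal.Quotient.mk IQuot (yA) = Ideal.Quotient.mk IQuot (yA^2) := by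
              try simp only [map_mul, map_pow, map_one]
              try ring
            rw [e]; exact hm 5
          · show Ideal.Quotient.mk IQuot (xA^2) * Ideal.Quotient.mk IQuot (yA) ∈ S
            have e : Ideal.Quotient.mk IQuot (xA^2) * Ideal.Quotient.mk IQuot (yA) = Ideal.Quotient.mk IQuot (xA^2*yA) := by
              try simp only [map_mul, map_pow, map_one]
              try ring
            rw [e]; exact hm 7
          · show Ideal.Quotient.mk IQuot (xA*yA) * Ideal.Quotient.mk IQuot (yA) ∈ S
            have e : Ideal.Quotient.mk IQuot (xA*yA) * Ideal.Quotient.mk IQuot (yA) = Ideal.Quotient.mk IQuot (xA*yA^2) := by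
              try simp only [map_mul, map_pow, map_one]
              try ring
            rw [e]; exact hm 8
          · show Ideal.Quotient.mk IQuot (yA^2) * Ideal.Quotient.mk IQuot (yA) ∈ S
            have e : Ideal.Quotient.mk IQuot (yA^2) * Ideal.Quotient.mk IQuot (yA) = Ideal.Quotient.mk IQuot (xA*yA^2) := by
              try simp only [map_mul, map_pow, map_one]
              try linear_combination (-1 : Axyz ⧸ IQuot) * ry3
            rw [e]; exact hm 8
          · show Ideal.Quotient.mk IQuot (zA) * Ideal.Quotient.mk IQuot (yA) ∈ S
            have e : Ideal.Quotient.mk IQuot (zA) * Ideal.Quotient.mk IQuot (yA) = 0 := by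
              try simp only [map_mul, map_pow, map_one]
              try linear_combination ryz
            rw [e]; exact zero_mem _
          · show Ideal.Quotient.mk IQuot (xA^2*yA) * Ideal.Quotient.mk IQuot (yA) ∈ S
            have e : Ideal.Quotient.mk IQuot (xA^2*yA) * Ideal.Quotient.mk IQuot (yA) = Ideal.Quotient.mk IQuot (xA^2*yA^2) := by
              try simp only [map_mul, map_pow, map_one]
              try ring
            rw [e]; exact hm 9
          · show Ideal.Quotient.mk IQuot (xA*yA^2) * Ideal.Quotient.mk IQuot (yA) ∈ S
            have e : Ideal.Quotient.mk IQuot (xA*yA^2) * Ideal.Quotient.mk IQuot (yA) = Ideal.Quotient.mk IQuot (xA^2*yA^2) := by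
              try simp only [map_mul, map_pow, map_one]
              try linear_combination (-(Ideal.Quotient.mk IQuot xA)) * ry3
            rw [e]; exact hm 9
          · show Ideal.Quotient.mk IQuot (xA^2*yA^2) * Ideal.Quotient.mk IQuot (yA) ∈ S
            have e : Ideal.Quotient.mk IQuot (xA^2*yA^2) * Ideal.Quotient.mk IQuot (yA) = 0 := by
              try simp only [map_mul, map_pow, map_one]
              try linear_combination (-(Ideal.Quotient.mk IQuot xA)^2) * ry3 + (Ideal.Quotient.mk IQuot yA)^2 * rx3
            rw [e]; exact zero_mem _
          · show Ideal.Quotient.mk IQuot ((1 : Axyz)) * Ideal.Quotient.mk IQuot (zA) ∈ S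
            have e : Ideal.Quotient.mk IQuot ((1 : Axyz)) * Ideal.Quotient.mk IQuot (zA) = Ideal.Quotient.mk IQuot (zA) := by
              try simp only [map_mul, map_pow, map_one]
              try ring
            rw [e]; exact hm 6
          · show Ideal.Quotient.mk IQuot (xA) * Ideal.Quotient.mk IQuot (zA) ∈ S
            have e : Ideal.Quotient.mk IQuot (xA) * Ideal.Quotient.mk IQuot (zA) = 0 := by
              try simp only [map_mul, map_pow, map_one]
              try linear_combination rxz
            rw [e]; exact zero_mem _
          · show Ideal.Quotient.mk IQuot (yA) * Ideal.Quotient.mk IQuot (zA) ∈ S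
            have e : Ideal.Quotient.mk IQuot (yA) * Ideal.Quotient.mk IQuot (zA) = 0 := by
              try simp only [map_mul, map_pow, map_one]
              try linear_combination ryz
            rw [e]; exact zero_mem _
          · show Ideal.Quotient.mk IQuot (xA^2) * Ideal.Quotient.mk IQuot (zA) ∈ S
            have e : Ideal.Quotient.mk IQuot (xA^2) * Ideal.Quotient.mk IQuot (zA) = 0 := by
              try simp only [map_mul, map_pow, map_one]
              try linear_combination (Ideal.Quotient.mk IQuot xA) * rxz
            rw [e]; exact zero_mem _
          · show Ideal.Quotient.mk IQuot (xA*yA) * Ideal.Quotient.mk IQuot (zA) ∈ S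
            have e : Ideal.Quotient.mk IQuot (xA*yA) * Ideal.Quotient.mk IQuot (zA) = 0 := by
              try simp only [map_mul, map_pow, map_one]
              try linear_combination (Ideal.Quotient.mk IQuot yA) * rxz
            rw [e]; exact zero_mem _
          · show Ideal.Quotient.mk IQuot (yA^2) * Ideal.Quotient.mk IQuot (zA) ∈ S
            have e : Ideal.Quotient.mk IQuot (yA^2) * Ideal.Quotient.mk IQuot (zA) = 0 := by
              try simp only [map_mul, map_pow, map_one]
              try linear_combination (Ideal.Quotient.mk IQuot yA) * ryz
            rw [e]; exact zero_mem _
          · show Ideal.Quotient.mk IQuot (zA) * Ideal.Quotient.mk IQuot (zA) ∈ S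
            have e : Ideal.Quotient.mk IQuot (zA) * Ideal.Quotient.mk IQuot (zA) = Ideal.Quotient.mk IQuot (xA^2*yA^2) := by
              try simp only [map_mul, map_pow, map_one]
              try linear_combination rz2
            rw [e]; exact hm 9
          · show Ideal.Quotient.mk IQuot (xA^2*yA) * Ideal.Quotient.mk IQuot (zA) ∈ S
            have e : Ideal.Quotient.mk IQuot (xA^2*yA) * Ideal.Quotient.mk IQuot (zA) = 0 := by
              try simp only [map_mul, map_pow, map_one]
              try linear_combination (Ideal.Quotient.mk IQuot xA)*(Ideal.Quotient.mk IQuot yA) * rxz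
            rw [e]; exact zero_mem _
          · show Ideal.Quotient.mk IQuot (xA*yA^2) * Ideal.Quotient.mk IQuot (zA) ∈ S
            have e : Ideal.Quotient.mk IQuot (xA*yA^2) * Ideal.Quotient.mk IQuot (zA) = 0 := by
              try simp only [map_mul, map_pow, map_one]
              try linear_combination (Ideal.Quotient.mk IQuot yA)^2 * rxz
            rw [e]; exact zero_mem _
          · show Ideal.Quotient.mk IQuot (xA^2*yA^2) * Ideal.Quotient.mk IQuot (zA) ∈ S
            have e : Ideal.Quotient.mk IQuot (xA^2*yA^2) * Ideal.Quotient.mk IQuot (zA) = 0 := by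
              try simp only [map_mul, map_pow, map_one]
              try linear_combination (Ideal.Quotient.mk IQuot xA)*(Ideal.Quotient.mk IQuot yA)^2 * rxz
            rw [e]; exact zero_mem _
      | zero => rw [zero_mul]; exact zero_mem _
      | add u w _ _ hu hw => rw [add_mul]; exact add_mem hu hw
      | smul a u _ hu => rw [smul_mul_assoc]; exact Submodule.smul_mem _ _ hu
    rintro v -
    obtain ⟨p, rfl⟩ := Ideal.Quotient.mk_surjective (I := IQuot) v
    induction p using MvPolynomial.induction_on with
    | C a =>
        have e : Ideal.Quotient.mk IQuot (MvPolynomial.C a) = a • Ideal.Quotient.mk IQuot (mons 0) := by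
          rw [show mons 0 = (1 : Axyz) from rfl,
            show (MvPolynomial.C a : Axyz) = a • (1 : Axyz) by
              rw [MvPolynomial.smul_eq_C_mul, mul_one],
            ← Ideal.Quotient.mkₐ_eq_mk ℚ IQuot, map_smul]
        rw [e]; exact Submodule.smul_mem _ _ (hm 0)
    | add p q hp hq => rw [map_add]; exact add_mem hp hq
    | mul_X p n hp => rw [map_mul]; exact key n _ hp
  refine ⟨?_, Module.Basis.mk li sp, fun i => Module.Basis.mk_apply li sp i⟩
  rw [Module.finrank_eq_card_basis (Module.Basis.mk li sp), Fintype.card_fin]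

end
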